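/- Let F be a field of characteristic not equal to 2. The Lie subalgebra of M₄(F) (with bracket [X,Y] = XY − YX) generated by the four matrices X_{1,1} = E₁₄+E₂₃, X_{−1,−1} = E₃₂+E₄₁, X_{1,−1} = E₁₂−E₄₃, X_{−1,1} = E₂₁−E₃₄ is exactly sp₄(F) = {X ∈ M₄(F) : XᵀJ + JX = 0}. -/

import Mathlib

open Matrix

attribute [local instance 100] LieRing.ofAssociativeRing

/-- The 4×4 matrix `J` given in 2×2 blocks by `[[0, I₂], [−I₂, 0]]`. -/
def Jmat (R : Type*) [CommRing R] : Matrix (Fin 4) (Fin 4) R :=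
  !![0, 0, 1, 0; 0, 0, 0, 1; -1, 0, 0, 0; 0, -1, 0, 0]

/-- `X_{1,1} = E₁₄ + E₂₃`. -/
def X11 (R : Type*) [CommRing R] : Matrix (Fin 4) (Fin 4) R :=
  !![0, 0, 0, 1; 0, 0, 1, 0; 0, 0, 0, 0; 0, 0, 0, 0]

/-- `X_{−1,−1} = E₃₂ + E₄₁`. -/
def Xm1m1 (R : Type*) [CommRing R] : Matrix (Fin 4) (Fin 4) R :=
  !![0, 0, 0, 0; 0, 0, 0, 0; 0, 1, 0, 0; 1, 0, 0, 0]

/-- `X_{1,−1} = E₁₂ − E₄₃`. -/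
def X1m1 (R : Type*) [CommRing R] : Matrix (Fin 4) (Fin 4) R :=
  !![0, 1, 0, 0; 0, 0, 0, 0; 0, 0, 0, 0; 0, 0, -1, 0]

/-- `X_{−1,1} = E₂₁ − E₃₄`. -/
def Xm11 (R : Type*) [CommRing R] : Matrix (Fin 4) (Fin 4) R :=
  !![0, 0, 0, 0; 1, 0, 0, 0; 0, 0, 0, -1; 0, 0, 0, 0]

section helpers

set_option linter.unusedSectionVars false

variable {R : Type*} [CommRing R]

theorem eta_fin_four (A : Matrix (Fin 4) (Fin 4) R) :
    A = !![A 0 0, A 0 1, A 0 2, A 0 3;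
           A 1 0, A 1 1, A 1 2, A 1 3;
           A 2 0, A 2 1, A 2 2, A 2 3;
           A 3 0, A 3 1, A 3 2, A 3 3] := by
  ext i j
  fin_cases i <;> fin_cases j <;> rfl

theorem mul_fin_four (a₀₀ a₀₁ a₀₂ a₀₃ a₁₀ a₁₁ a₁₂ a₁₃ a₂₀ a₂₁ a₂₂ a₂₃ a₃₀ a₃₁ a₃₂ a₃₃
    b₀₀ b₀₁ b₀₂ b₀₃ b₁₀ b₁₁ b₁₂ b₁₃ b₂₀ b₂₁ b₂₂ b₂₃ b₃₀ b₃₁ b₃₂ b₃₃ : R) :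
    !![a₀₀, a₀₁, a₀₂, a₀₃; a₁₀, a₁₁, a₁₂, a₁₃; a₂₀, a₂₁, a₂₂, a₂₃; a₃₀, a₃₁, a₃₂, a₃₃] *
    !![b₀₀, b₀₁, b₀₂, b₀₃; b₁₀, b₁₁, b₁₂, b₁₃; b₂₀, b₂₁, b₂₂, b₂₃; b₃₀, b₃₁, b₃₂, b₃₃] =
    !![a₀₀*b₀₀ + a₀₁*b₁₀ + a₀₂*b₂₀ + a₀₃*b₃₀, a₀₀*b₀₁ + a₀₁*b₁₁ + a₀₂*b₂₁ + a₀₃*b₃₁,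
       a₀₀*b₀₂ + a₀₁*b₁₂ + a₀₂*b₂₂ + a₀₃*b₃₂, a₀₀*b₀₃ + a₀₁*b₁₃ + a₀₂*b₂₃ + a₀₃*b₃₃;
       a₁₀*b₀₀ + a₁₁*b₁₀ + a₁₂*b₂₀ + a₁₃*b₃₀, a₁₀*b₀₁ + a₁₁*b₁₁ + a₁₂*b₂₁ + a₁₃*b₃₁,
       a₁₀*b₀₂ + a₁₁*b₁₂ + a₁₂*b₂₂ + a₁₃*b₃₂, a₁₀*b₀₃ + a₁₁*b₁₃ + a₁₂*b₂₃ + a₁₃*b₃₃;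
       a₂₀*b₀₀ + a₂₁*b₁₀ + a₂₂*b₂₀ + a₂₃*b₃₀, a₂₀*b₀₁ + a₂₁*b₁₁ + a₂₂*b₂₁ + a₂₃*b₃₁,
       a₂₀*b₀₂ + a₂₁*b₁₂ + a₂₂*b₂₂ + a₂₃*b₃₂, a₂₀*b₀₃ + a₂₁*b₁₃ + a₂₂*b₂₃ + a₂₃*b₃₃;
       a₃₀*b₀₀ + a₃₁*b₁₀ + a₃₂*b₂₀ + a₃₃*b₃₀, a₃₀*b₀₁ + a₃₁*b₁₁ + a₃₂*b₂₁ + a₃₃*b₃₁,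
       a₃₀*b₀₂ + a₃₁*b₁₂ + a₃₂*b₂₂ + a₃₃*b₃₂, a₃₀*b₀₃ + a₃₁*b₁₃ + a₃₂*b₂₃ + a₃₃*b₃₃] := by
  ext i j
  rw [Matrix.mul_apply, Fin.sum_univ_four]
  fin_cases i <;> fin_cases j <;> rfl

theorem transpose_fin_four (a₀₀ a₀₁ a₀₂ a₀₃ a₁₀ a₁₁ a₁₂ a₁₃ a₂₀ a₂₁ a₂₂ a₂₃ a₃₀ a₃₁ a₃₂ a₃₃ : R) :
    (!![a₀₀, a₀₁, a₀₂, a₀₃; a₁₀, a₁₁, a₁₂, a₁₃; a₂₀, a₂₁, a₂₂, a₂₃; a₃₀, a₃₁, a₃₂, a₃₃])ᵀ =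
    !![a₀₀, a₁₀, a₂₀, a₃₀; a₀₁, a₁₁, a₂₁, a₃₁; a₀₂, a₁₂, a₂₂, a₃₂; a₀₃, a₁₃, a₂₃, a₃₃] := by
  ext i j
  fin_cases i <;> fin_cases j <;> rfl

theorem add_fin_four (a₀₀ a₀₁ a₀₂ a₀₃ a₁₀ a₁₁ a₁₂ a₁₃ a₂₀ a₂₁ a₂₂ a₂₃ a₃₀ a₃₁ a₃₂ a₃₃
    b₀₀ b₀₁ b₀₂ b₀₃ b₁₀ b₁₁ b₁₂ b₁₃ b₂₀ b₂₁ b₂₂ b₂₃ b₃₀ b₃₁ b₃₂ b₃₃ : R) :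
    !![a₀₀, a₀₁, a₀₂, a₀₃; a₁₀, a₁₁, a₁₂, a₁₃; a₂₀, a₂₁, a₂₂, a₂₃; a₃₀, a₃₁, a₃₂, a₃₃] +
    !![b₀₀, b₀₁, b₀₂, b₀₃; b₁₀, b₁₁, b₁₂, b₁₃; b₂₀, b₂₁, b₂₂, b₂₃; b₃₀, b₃₁, b₃₂, b₃₃] =
    !![a₀₀+b₀₀, a₀₁+b₀₁, a₀₂+b₀₂, a₀₃+b₀₃; a₁₀+b₁₀, a₁₁+b₁₁, a₁₂+b₁₂, a₁₃+b₁₃;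
       a₂₀+b₂₀, a₂₁+b₂₁, a₂₂+b₂₂, a₂₃+b₂₃; a₃₀+b₃₀, a₃₁+b₃₁, a₃₂+b₃₂, a₃₃+b₃₃] := by
  ext i j
  fin_cases i <;> fin_cases j <;> rfl

theorem sub_fin_four (a₀₀ a₀₁ a₀₂ a₀₃ a₁₀ a₁₁ a₁₂ a₁₃ a₂₀ a₂₁ a₂₂ a₂₃ a₃₀ a₃₁ a₃₂ a₃₃
    b₀₀ b₀₁ b₀₂ b₀₃ b₁₀ b₁₁ b₁₂ b₁₃ b₂₀ b₂₁ b₂₂ b₂₃ b₃₀ b₃₁ b₃₂ b₃₃ : R) :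
    !![a₀₀, a₀₁, a₀₂, a₀₃; a₁₀, a₁₁, a₁₂, a₁₃; a₂₀, a₂₁, a₂₂, a₂₃; a₃₀, a₃₁, a₃₂, a₃₃] -
    !![b₀₀, b₀₁, b₀₂, b₀₃; b₁₀, b₁₁, b₁₂, b₁₃; b₂₀, b₂₁, b₂₂, b₂₃; b₃₀, b₃₁, b₃₂, b₃₃] =
    !![a₀₀-b₀₀, a₀₁-b₀₁, a₀₂-b₀₂, a₀₃-b₀₃; a₁₀-b₁₀, a₁₁-b₁₁, a₁₂-b₁₂, a₁₃-b₁₃;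
       a₂₀-b₂₀, a₂₁-b₂₁, a₂₂-b₂₂, a₂₃-b₂₃; a₃₀-b₃₀, a₃₁-b₃₁, a₃₂-b₃₂, a₃₃-b₃₃] := by
  ext i j
  fin_cases i <;> fin_cases j <;> rfl

theorem smul_fin_four (c : R)
    (a₀₀ a₀₁ a₀₂ a₀₃ a₁₀ a₁₁ a₁₂ a₁₃ a₂₀ a₂₁ a₂₂ a₂₃ a₃₀ a₃₁ a₃₂ a₃₃ : R) :
    c • !![a₀₀, a₀₁, a₀₂, a₀₃; a₁₀, a₁₁, a₁₂, a₁₃; a₂₀, a₂₁, a₂₂, a₂₃; a₃₀, a₃₁, a₃₂, a₃₃] =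
    !![c*a₀₀, c*a₀₁, c*a₀₂, c*a₀₃; c*a₁₀, c*a₁₁, c*a₁₂, c*a₁₃;
       c*a₂₀, c*a₂₁, c*a₂₂, c*a₂₃; c*a₃₀, c*a₃₁, c*a₃₂, c*a₃₃] := by
  ext i j
  fin_cases i <;> fin_cases j <;> rfl

theorem zero_fin_four :
    (0 : Matrix (Fin 4) (Fin 4) R) = !![0,0,0,0;0,0,0,0;0,0,0,0;0,0,0,0] := by
  ext i j
  fin_cases i <;> fin_cases j <;> rfl

theorem eq_fin_four {a₀₀ a₀₁ a₀₂ a₀₃ a₁₀ a₁₁ a₁₂ a₁₃ a₂₀ a₂₁ a₂₂ a₂₃ a₃₀ a₃₁ a₃₂ a₃₃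
    b₀₀ b₀₁ b₀₂ b₀₃ b₁₀ b₁₁ b₁₂ b₁₃ b₂₀ b₂₁ b₂₂ b₂₃ b₃₀ b₃₁ b₃₂ b₃₃ : R}
    (h₀₀ : a₀₀ = b₀₀) (h₀₁ : a₀₁ = b₀₁) (h₀₂ : a₀₂ = b₀₂) (h₀₃ : a₀₃ = b₀₃)
    (h₁₀ : a₁₀ = b₁₀) (h₁₁ : a₁₁ = b₁₁) (h₁₂ : a₁₂ = b₁₂) (h₁₃ : a₁₃ = b₁₃)
    (h₂₀ : a₂₀ = b₂₀) (h₂₁ : a₂₁ = b₂₁) (h₂₂ : a₂₂ = b₂₂) (h₂₃ : a₂₃ = b₂₃)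
    (h₃₀ : a₃₀ = b₃₀) (h₃₁ : a₃₁ = b₃₁) (h₃₂ : a₃₂ = b₃₂) (h₃₃ : a₃₃ = b₃₃) :
    !![a₀₀, a₀₁, a₀₂, a₀₃; a₁₀, a₁₁, a₁₂, a₁₃; a₂₀, a₂₁, a₂₂, a₂₃; a₃₀, a₃₁, a₃₂, a₃₃] =
    !![b₀₀, b₀₁, b₀₂, b₀₃; b₁₀, b₁₁, b₁₂, b₁₃; b₂₀, b₂₁, b₂₂, b₂₃; b₃₀, b₃₁, b₃₂, b₃₃] := by
  subst h₀₀ h₀₁ h₀₂ h₀₃ h₁₀ h₁₁ h₁₂ h₁₃ h₂₀ h₂₁ h₂₂ h₂₃ h₃₀ h₃₁ h₃₂ h₃₃; rfl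

end helpers

/-- `sp₄` as a Lie subalgebra of `M₄(F)`. -/
def sp4Lie (F : Type*) [Field F] : LieSubalgebra F (Matrix (Fin 4) (Fin 4) F) where
  carrier := {X | Xᵀ * Jmat F + Jmat F * X = 0}
  add_mem' := by
    intro a b ha hb
    simp only [Set.mem_setOf_eq] at *
    rw [transpose_add, add_mul, mul_add,
      show aᵀ * Jmat F + bᵀ * Jmat F + (Jmat F * a + Jmat F * b)
        = (aᵀ * Jmat F + Jmat F * a) + (bᵀ * Jmat F + Jmat F * b) by abel,
      ha, hb, add_zero]
  smul_mem' := by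
    intro c a ha
    simp only [Set.mem_setOf_eq] at *
    rw [transpose_smul, smul_mul_assoc, mul_smul_comm, ← smul_add, ha, smul_zero]
  zero_mem' := by simp
  lie_mem' := by
    intro x y hx hy
    simp only [Set.mem_setOf_eq] at *
    have hx' : xᵀ * Jmat F = -(Jmat F * x) := eq_neg_of_add_eq_zero_left hx
    have hy' : yᵀ * Jmat F = -(Jmat F * y) := eq_neg_of_add_eq_zero_left hy
    rw [Ring.lie_def, transpose_sub, transpose_mul, transpose_mul, sub_mul, mul_sub,
      mul_assoc, mul_assoc, hx', hy', mul_neg, mul_neg, ← mul_assoc, ← mul_assoc, hx', hy']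
    noncomm_ring

/-- Over a field of characteristic `≠ 2`, the Lie subalgebra of `M₄(F)` generated by
`X_{1,1}, X_{−1,−1}, X_{1,−1}, X_{−1,1}` is exactly
`sp₄(F) = {X ∈ M₄(F) : XᵀJ + JX = 0}`. -/
theorem lie_span_root_vectors_eq_sp4 (F : Type*) [Field F] (h2 : (2 : F) ≠ 0) :
    (LieSubalgebra.lieSpan F (Matrix (Fin 4) (Fin 4) F)
        {X11 F, Xm1m1 F, X1m1 F, Xm11 F} : Set (Matrix (Fin 4) (Fin 4) F))
      = {X | Xᵀ * Jmat F + Jmat F * X = 0} := by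
  apply Set.Subset.antisymm
  · -- span ⊆ sp4
    have hle : LieSubalgebra.lieSpan F (Matrix (Fin 4) (Fin 4) F)
        {X11 F, Xm1m1 F, X1m1 F, Xm11 F} ≤ sp4Lie F := by
      rw [LieSubalgebra.lieSpan_le]
      intro Y hY
      rcases hY with rfl | rfl | rfl | rfl <;>
      · show _ ∈ {X : Matrix (Fin 4) (Fin 4) F | Xᵀ * Jmat F + Jmat F * X = 0}
        simp only [Set.mem_setOf_eq, X11, Xm1m1, X1m1, Xm11, Jmat, transpose_fin_four,
          mul_fin_four, add_fin_four, zero_fin_four]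
        apply eq_fin_four <;> ring
    exact fun x hx => hle hx
  · -- sp4 ⊆ span
    intro X hX
    simp only [Set.mem_setOf_eq] at hX
    set sp := LieSubalgebra.lieSpan F (Matrix (Fin 4) (Fin 4) F)
        {X11 F, Xm1m1 F, X1m1 F, Xm11 F} with hsp
    have ha : X11 F ∈ sp := LieSubalgebra.subset_lieSpan (by simp)
    have hb : Xm1m1 F ∈ sp := LieSubalgebra.subset_lieSpan (by simp)
    have hc : X1m1 F ∈ sp := LieSubalgebra.subset_lieSpan (by simp)
    have hd : Xm11 F ∈ sp := LieSubalgebra.subset_lieSpan (by simp)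
    -- bracket computations
    have bca : ⁅X1m1 F, X11 F⁆ = (!![0,0,2,0;0,0,0,0;0,0,0,0;0,0,0,0] : Matrix _ _ F) := by
      rw [Ring.lie_def, X1m1, X11, mul_fin_four, mul_fin_four, sub_fin_four]
      apply eq_fin_four <;> ring
    have bda : ⁅Xm11 F, X11 F⁆ = (!![0,0,0,0;0,0,0,2;0,0,0,0;0,0,0,0] : Matrix _ _ F) := by
      rw [Ring.lie_def, Xm11, X11, mul_fin_four, mul_fin_four, sub_fin_four]
      apply eq_fin_four <;> ring
    have bdb : ⁅Xm11 F, Xm1m1 F⁆ = (!![0,0,0,0;0,0,0,0;-2,0,0,0;0,0,0,0] : Matrix _ _ F) := by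
      rw [Ring.lie_def, Xm11, Xm1m1, mul_fin_four, mul_fin_four, sub_fin_four]
      apply eq_fin_four <;> ring
    have bcb : ⁅X1m1 F, Xm1m1 F⁆ = (!![0,0,0,0;0,0,0,0;0,0,0,0;0,-2,0,0] : Matrix _ _ F) := by
      rw [Ring.lie_def, X1m1, Xm1m1, mul_fin_four, mul_fin_four, sub_fin_four]
      apply eq_fin_four <;> ring
    have bab : ⁅X11 F, Xm1m1 F⁆ = (!![1,0,0,0;0,1,0,0;0,0,-1,0;0,0,0,-1] : Matrix _ _ F) := by
      rw [Ring.lie_def, X11, Xm1m1, mul_fin_four, mul_fin_four, sub_fin_four]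
      apply eq_fin_four <;> ring
    have bcd : ⁅X1m1 F, Xm11 F⁆ = (!![1,0,0,0;0,-1,0,0;0,0,-1,0;0,0,0,1] : Matrix _ _ F) := by
      rw [Ring.lie_def, X1m1, Xm11, mul_fin_four, mul_fin_four, sub_fin_four]
      apply eq_fin_four <;> ring
    -- membership of auxiliary basis matrices
    have he13 : (!![0,0,1,0;0,0,0,0;0,0,0,0;0,0,0,0] : Matrix _ _ F) ∈ sp := by
      have h : (!![0,0,1,0;0,0,0,0;0,0,0,0;0,0,0,0] : Matrix _ _ F)
          = (2⁻¹ : F) • ⁅X1m1 F, X11 F⁆ := by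
        rw [bca, smul_fin_four]
        apply eq_fin_four <;> (field_simp; try ring)
      rw [h]; exact sp.smul_mem _ (sp.lie_mem hc ha)
    have he24 : (!![0,0,0,0;0,0,0,1;0,0,0,0;0,0,0,0] : Matrix _ _ F) ∈ sp := by
      have h : (!![0,0,0,0;0,0,0,1;0,0,0,0;0,0,0,0] : Matrix _ _ F)
          = (2⁻¹ : F) • ⁅Xm11 F, X11 F⁆ := by
        rw [bda, smul_fin_four]
        apply eq_fin_four <;> (field_simp; try ring)
      rw [h]; exact sp.smul_mem _ (sp.lie_mem hd ha)
    have he31 : (!![0,0,0,0;0,0,0,0;1,0,0,0;0,0,0,0] : Matrix _ _ F) ∈ sp := by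
      have h : (!![0,0,0,0;0,0,0,0;1,0,0,0;0,0,0,0] : Matrix _ _ F)
          = (-2⁻¹ : F) • ⁅Xm11 F, Xm1m1 F⁆ := by
        rw [bdb, smul_fin_four]
        apply eq_fin_four <;> (field_simp; try ring)
      rw [h]; exact sp.smul_mem _ (sp.lie_mem hd hb)
    have he42 : (!![0,0,0,0;0,0,0,0;0,0,0,0;0,1,0,0] : Matrix _ _ F) ∈ sp := by
      have h : (!![0,0,0,0;0,0,0,0;0,0,0,0;0,1,0,0] : Matrix _ _ F)
          = (-2⁻¹ : F) • ⁅X1m1 F, Xm1m1 F⁆ := by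
        rw [bcb, smul_fin_four]
        apply eq_fin_four <;> (field_simp; try ring)
      rw [h]; exact sp.smul_mem _ (sp.lie_mem hc hb)
    have hd1 : (!![1,0,0,0;0,0,0,0;0,0,-1,0;0,0,0,0] : Matrix _ _ F) ∈ sp := by
      have h : (!![1,0,0,0;0,0,0,0;0,0,-1,0;0,0,0,0] : Matrix _ _ F)
          = (2⁻¹ : F) • (⁅X11 F, Xm1m1 F⁆ + ⁅X1m1 F, Xm11 F⁆) := by
        rw [bab, bcd, add_fin_four, smul_fin_four]
        apply eq_fin_four <;> (field_simp; try ring)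
      rw [h]
      exact sp.smul_mem _ (sp.add_mem (sp.lie_mem ha hb) (sp.lie_mem hc hd))
    have hd2 : (!![0,0,0,0;0,1,0,0;0,0,0,0;0,0,0,-1] : Matrix _ _ F) ∈ sp := by
      have h : (!![0,0,0,0;0,1,0,0;0,0,0,0;0,0,0,-1] : Matrix _ _ F)
          = (2⁻¹ : F) • (⁅X11 F, Xm1m1 F⁆ - ⁅X1m1 F, Xm11 F⁆) := by
        rw [bab, bcd, sub_fin_four, smul_fin_four]
        apply eq_fin_four <;> (field_simp; try ring)
      rw [h]
      exact sp.smul_mem _ (sp.sub_mem (sp.lie_mem ha hb) (sp.lie_mem hc hd))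
    -- the explicit form of the defining equation
    have key : Xᵀ * Jmat F + Jmat F * X =
        !![-(X 2 0) + X 2 0, -(X 3 0) + X 2 1, X 0 0 + X 2 2, X 1 0 + X 2 3;
           -(X 2 1) + X 3 0, -(X 3 1) + X 3 1, X 0 1 + X 3 2, X 1 1 + X 3 3;
           -(X 2 2) - X 0 0, -(X 3 2) - X 0 1, X 0 2 - X 0 2, X 1 2 - X 0 3;
           -(X 2 3) - X 1 0, -(X 3 3) - X 1 1, X 0 3 - X 1 2, X 1 3 - X 1 3] := by
      conv_lhs => rw [eta_fin_four X]
      rw [Jmat, transpose_fin_four, mul_fin_four, mul_fin_four, add_fin_four]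
      apply eq_fin_four <;> ring
    have hX' := key.symm.trans hX
    rw [zero_fin_four] at hX'
    have h02 := congrFun (congrFun hX' 0) 2
    have h03 := congrFun (congrFun hX' 0) 3
    have h12 := congrFun (congrFun hX' 1) 2
    have h13 := congrFun (congrFun hX' 1) 3
    have h23 := congrFun (congrFun hX' 2) 3
    have h01 := congrFun (congrFun hX' 0) 1
    simp only [Matrix.cons_val', Matrix.cons_val_zero, Matrix.cons_val_one,
      Matrix.cons_val_two, Matrix.cons_val_three, Matrix.cons_val_succ, Matrix.head_cons, Matrix.head_fin_const,
      Matrix.empty_val', Matrix.cons_val_fin_one, Matrix.vecHead, Matrix.vecTail,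
      Matrix.of_apply, Function.comp_apply] at h02 h03 h12 h13 h23 h01
    have h22' : X 2 2 = -X 0 0 := by linear_combination h02
    have h23' : X 2 3 = -X 1 0 := by linear_combination h03
    have h32' : X 3 2 = -X 0 1 := by linear_combination h12
    have h33' : X 3 3 = -X 1 1 := by linear_combination h13
    have h12' : X 1 2 = X 0 3 := by linear_combination h23
    have h30' : X 3 0 = X 2 1 := by linear_combination -h01
    -- X as an explicit linear combination
    have hXeq : X = X 0 0 • (!![1,0,0,0;0,0,0,0;0,0,-1,0;0,0,0,0] : Matrix _ _ F)
        + X 1 1 • (!![0,0,0,0;0,1,0,0;0,0,0,0;0,0,0,-1] : Matrix _ _ F)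
        + X 0 1 • X1m1 F + X 1 0 • Xm11 F
        + X 0 2 • (!![0,0,1,0;0,0,0,0;0,0,0,0;0,0,0,0] : Matrix _ _ F)
        + X 0 3 • X11 F
        + X 1 3 • (!![0,0,0,0;0,0,0,1;0,0,0,0;0,0,0,0] : Matrix _ _ F)
        + X 2 0 • (!![0,0,0,0;0,0,0,0;1,0,0,0;0,0,0,0] : Matrix _ _ F)
        + X 2 1 • Xm1m1 F
        + X 3 1 • (!![0,0,0,0;0,0,0,0;0,0,0,0;0,1,0,0] : Matrix _ _ F) := by
      conv_lhs => rw [eta_fin_four X]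
      rw [X11, Xm1m1, X1m1, Xm11]
      simp only [smul_fin_four, add_fin_four]
      apply eq_fin_four <;> ((try simp only [h22', h23', h32', h33', h12', h30']); ring)
    rw [hXeq]
    exact sp.add_mem (sp.add_mem (sp.add_mem (sp.add_mem (sp.add_mem (sp.add_mem (sp.add_mem
      (sp.add_mem (sp.add_mem (sp.smul_mem _ hd1) (sp.smul_mem _ hd2)) (sp.smul_mem _ hc))
      (sp.smul_mem _ hd)) (sp.smul_mem _ he13)) (sp.smul_mem _ ha)) (sp.smul_mem _ he24))
      (sp.smul_mem _ he31)) (sp.smul_mem _ hb)) (sp.smul_mem _ he42)
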